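/- arXiv:2303.16365 — 2 statements merged into one kernel-verified Lean document; each statement's English description precedes it below -/
import Mathlib

section
/- Every isometry of bounded displacement of the Euclidean space ℝⁿ is a pure translation. -/
/-- Every isometry of bounded displacement of Euclidean space `ℝⁿ` is a pure translation. -/
theorem bounded_displacement_isometry_euclidean_is_translation
    (n : ℕ) (γ : EuclideanSpace ℝ (Fin n) ≃ᵢ EuclideanSpace ℝ (Fin n))
    (hbdd : ∃ C : ℝ, ∀ x, dist x (γ x) ≤ C) :
    ∃ v : EuclideanSpace ℝ (Fin n), ∀ x, γ x = x + v := by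
  obtain ⟨C, hC⟩ := hbdd
  set f := γ.toRealAffineIsometryEquiv with hf
  have hfγ : ∀ x, f x = γ x := fun x => congrFun (γ.coeFn_toRealAffineIsometryEquiv) x
  set L := f.linearIsometryEquiv with hL
  have key : ∀ x, γ x = L x + γ 0 := by
    intro x
    have h1 : f (x +ᵥ (0 : EuclideanSpace ℝ (Fin n))) = L x +ᵥ f 0 := f.map_vadd 0 x
    simp only [vadd_eq_add, add_zero] at h1
    rw [hfγ, hfγ] at h1
    exact h1
  have hbound : ∀ y, ‖L y - y‖ ≤ C + ‖γ 0‖ := by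
    intro y
    have hy := hC y
    rw [key y, dist_eq_norm] at hy
    have heq : L y - y = -(y - (L y + γ 0)) - γ 0 := by abel
    rw [heq]
    calc ‖-(y - (L y + γ 0)) - γ 0‖ ≤ ‖-(y - (L y + γ 0))‖ + ‖γ 0‖ := norm_sub_le _ _
      _ = ‖y - (L y + γ 0)‖ + ‖γ 0‖ := by rw [norm_neg]
      _ ≤ C + ‖γ 0‖ := by linarith
  have hLid : ∀ x, L x = x := by
    intro x
    by_contra hne
    have hpos : 0 < ‖L x - x‖ := by simpa [sub_eq_zero] using hne
    obtain ⟨t, ht⟩ := exists_nat_gt ((C + ‖γ 0‖) / ‖L x - x‖)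
    have hb := hbound ((t : ℝ) • x)
    rw [map_smul, ← smul_sub, norm_smul] at hb
    have h2 : C + ‖γ 0‖ < (t : ℝ) * ‖L x - x‖ := by rwa [div_lt_iff₀ hpos] at ht
    have habs : ‖(t : ℝ)‖ = (t : ℝ) := by simp
    rw [habs] at hb
    linarith
  exact ⟨γ 0, fun x => by rw [key x, hLid x]⟩
end

section
/- A unitary transformation u ∈ U(n) acts on the unit sphere S^{2n-1} ⊂ ℂⁿ with constant displacement if and only if all eigenvalues of u have the same real part; equivalently, the eigenvalues of u form a subset of {λ, conj(λ)} for a single unit complex number λ. -/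
open Matrix Module.End

local notation "⟪" x ", " y "⟫" => @inner ℂ _ _ x y

set_option maxHeartbeats 1000000 in
/-- A unitary transformation `u ∈ U(n)` acts on the unit sphere `S^{2n-1} ⊂ ℂⁿ` with
constant displacement if and only if all eigenvalues of `u` have the same real part. -/
theorem unitary_constant_displacement_iff_eigenvalues_same_re
    (n : ℕ) (u : Matrix.unitaryGroup (Fin n) ℂ) :
    (∃ c : ℝ, ∀ v : EuclideanSpace ℂ (Fin n), ‖v‖ = 1 →
      ‖Matrix.toEuclideanLin (u : Matrix (Fin n) (Fin n) ℂ) v - v‖ = c) ↔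
    (∃ r : ℝ, ∀ μ : ℂ,
      Module.End.HasEigenvalue
        (Matrix.toEuclideanLin (u : Matrix (Fin n) (Fin n) ℂ)) μ → μ.re = r) := by
  set T : EuclideanSpace ℂ (Fin n) →ₗ[ℂ] EuclideanSpace ℂ (Fin n) :=
    Matrix.toEuclideanLin (u : Matrix (Fin n) (Fin n) ℂ) with hTdef
  have hadj : LinearMap.adjoint T = Matrix.toEuclideanLin ((u : Matrix (Fin n) (Fin n) ℂ)ᴴ) :=
    (Matrix.toEuclideanLin_conjTranspose_eq_adjoint _).symm
  have hmul : ∀ A B : Matrix (Fin n) (Fin n) ℂ,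
      Matrix.toEuclideanLin (A * B) = (Matrix.toEuclideanLin A) ∘ₗ (Matrix.toEuclideanLin B) := by
    intro A B
    rw [Matrix.toEuclideanLin_eq_toLin, Matrix.toLin_mul _ (PiLp.basisFun 2 ℂ (Fin n)) _]
  have huu : ((u : Matrix (Fin n) (Fin n) ℂ)ᴴ) * (u : Matrix (Fin n) (Fin n) ℂ) = 1 := by
    have := u.prop.1; rwa [Matrix.star_eq_conjTranspose] at this
  have huu' : (u : Matrix (Fin n) (Fin n) ℂ) * ((u : Matrix (Fin n) (Fin n) ℂ)ᴴ) = 1 := by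
    have := u.prop.2; rwa [Matrix.star_eq_conjTranspose] at this
  have hone : Matrix.toEuclideanLin (1 : Matrix (Fin n) (Fin n) ℂ) = LinearMap.id := by
    rw [Matrix.toEuclideanLin_eq_toLin, Matrix.toLin_one]
  have h1 : (LinearMap.adjoint T) ∘ₗ T = LinearMap.id := by
    rw [hadj, hTdef, ← hmul, huu, hone]
  have h2 : T ∘ₗ (LinearMap.adjoint T) = LinearMap.id := by
    rw [hadj, hTdef, ← hmul, huu', hone]
  have hTaT : ∀ v, LinearMap.adjoint T (T v) = v := fun v =>
    congrFun (congrArg DFunLike.coe h1) v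
  have hinner : ∀ v w, ⟪T v, T w⟫ = ⟪v, w⟫ := by
    intro v w
    rw [← LinearMap.adjoint_inner_left, hTaT]
  have hnorm : ∀ v, ‖T v‖ = ‖v‖ := by
    intro v
    have h2 : ‖T v‖ ^ 2 = ‖v‖ ^ 2 := by
      have h := hinner v v
      rw [inner_self_eq_norm_sq_to_K (𝕜 := ℂ), inner_self_eq_norm_sq_to_K (𝕜 := ℂ)] at h
      exact_mod_cast h
    nlinarith [norm_nonneg (T v), norm_nonneg v]
  have habs : ∀ μ : ℂ, Module.End.HasEigenvalue T μ → ‖μ‖ = 1 := by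
    intro μ hμ
    obtain ⟨w, hw⟩ := hμ.exists_hasEigenvector
    have h := hnorm w
    rw [hw.apply_eq_smul, norm_smul] at h
    have hw0 : ‖w‖ ≠ 0 := norm_ne_zero_iff.mpr hw.2
    field_simp at h
    exact h
  constructor
  · rintro ⟨c, hc⟩
    refine ⟨1 - c ^ 2 / 2, fun μ hμ => ?_⟩
    obtain ⟨w, hw⟩ := hμ.exists_hasEigenvector
    set w' : EuclideanSpace ℂ (Fin n) := (‖w‖⁻¹ : ℝ) • w with hw'def
    have hw0 : ‖w‖ ≠ 0 := norm_ne_zero_iff.mpr hw.2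
    have hw'1 : ‖w'‖ = 1 := by
      rw [hw'def, norm_smul, norm_inv, norm_norm]; field_simp
    have hTw' : T w' = μ • w' := by
      rw [hw'def, LinearMap.map_smul_of_tower, hw.apply_eq_smul, smul_comm]
    have hdisp := hc w' hw'1
    rw [hTw', show μ • w' - w' = (μ - 1) • w' by rw [sub_smul, one_smul],
      norm_smul, hw'1, mul_one] at hdisp
    have hμ1 : ‖μ‖ = 1 := by exact habs μ hμ
    have e1 : ‖μ - 1‖ ^ 2 = (μ.re - 1) ^ 2 + μ.im ^ 2 := by
      rw [Complex.sq_norm, Complex.normSq_apply]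
      simp [Complex.sub_re, Complex.sub_im]
      ring
    have e2 : μ.re ^ 2 + μ.im ^ 2 = 1 := by
      have h := congrArg (· ^ 2) hμ1
      simp only [Complex.sq_norm, Complex.normSq_apply, one_pow] at h
      nlinarith [h]
    have e3 := e1
    rw [hdisp] at e3
    nlinarith [e2, e3]
  · rintro ⟨r, hr⟩
    rcases subsingleton_or_nontrivial (EuclideanSpace ℂ (Fin n)) with hsub | hnt
    · refine ⟨0, fun v hv => absurd hv ?_⟩
      rw [Subsingleton.elim v 0, norm_zero]
      norm_num
    · set S : EuclideanSpace ℂ (Fin n) →ₗ[ℂ] EuclideanSpace ℂ (Fin n) :=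
        T + LinearMap.adjoint T with hSdef
      have hSym : S.IsSymmetric := by
        intro x y
        simp only [hSdef, LinearMap.add_apply, inner_add_left, inner_add_right,
          LinearMap.adjoint_inner_left, LinearMap.adjoint_inner_right]
        ring
      have hST : S ∘ₗ T = T ∘ₗ S := by
        simp only [hSdef, LinearMap.add_comp, LinearMap.comp_add, h1, h2]
      have hfin : Module.finrank ℂ (EuclideanSpace ℂ (Fin n)) = n := by
        simp [finrank_euclideanSpace]
      have hEig : ∀ i : Fin n, hSym.eigenvalues hfin i = 2 * r := by
        intro i
        set lam := hSym.eigenvalues hfin i with hlam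
        set E := Module.End.eigenspace S (lam : ℂ) with hE
        have hbE : (hSym.eigenvectorBasis hfin i) ∈ E :=
          (hSym.hasEigenvector_eigenvectorBasis hfin i).1
        have hb0 : (hSym.eigenvectorBasis hfin i) ≠ 0 :=
          (hSym.hasEigenvector_eigenvectorBasis hfin i).2
        have hinv : ∀ x ∈ E, T x ∈ E := by
          intro x hx
          rw [hE, Module.End.mem_eigenspace_iff] at hx ⊢
          have h := congrFun (congrArg DFunLike.coe hST) x
          simp only [LinearMap.comp_apply] at h
          rw [h, hx, LinearMap.map_smul]
        have hEnt : Nontrivial E :=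
          Submodule.nontrivial_iff_ne_bot.mpr (hSym.hasEigenvalue_eigenvalues hfin i)
        obtain ⟨μ, hμ⟩ := Module.End.exists_eigenvalue (T.restrict hinv)
        obtain ⟨w, hw⟩ := hμ.exists_hasEigenvector
        have hw0 : (w : EuclideanSpace ℂ (Fin n)) ≠ 0 := fun h => hw.2 (Subtype.ext h)
        have hTw : T (w : EuclideanSpace ℂ (Fin n)) = μ • (w : EuclideanSpace ℂ (Fin n)) := by
          have h := congrArg (Subtype.val) hw.apply_eq_smul
          simpa [LinearMap.restrict_apply] using h
        have hTeig : Module.End.HasEigenvalue T μ :=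
          Module.End.hasEigenvalue_of_hasEigenvector
            ⟨Module.End.mem_eigenspace_iff.mpr hTw, hw0⟩
        have hre : μ.re = r := hr μ hTeig
        have hμ1 : ‖μ‖ = 1 := habs μ hTeig
        have hμ0 : μ ≠ 0 := by
          intro h; rw [h] at hμ1; simp at hμ1
        have haw : LinearMap.adjoint T (w : EuclideanSpace ℂ (Fin n))
            = μ⁻¹ • (w : EuclideanSpace ℂ (Fin n)) := by
          have h := hTaT (w : EuclideanSpace ℂ (Fin n))
          rw [hTw, LinearMap.map_smul] at h
          calc LinearMap.adjoint T (w : EuclideanSpace ℂ (Fin n))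
              = μ⁻¹ • (μ • LinearMap.adjoint T (w : EuclideanSpace ℂ (Fin n))) := by
                rw [smul_smul, inv_mul_cancel₀ hμ0, one_smul]
            _ = μ⁻¹ • (w : EuclideanSpace ℂ (Fin n)) := by rw [h]
        have hSw : S (w : EuclideanSpace ℂ (Fin n))
            = (μ + μ⁻¹) • (w : EuclideanSpace ℂ (Fin n)) := by
          simp [hSdef, hTw, haw, add_smul]
        have hSw' : S (w : EuclideanSpace ℂ (Fin n))
            = (lam : ℂ) • (w : EuclideanSpace ℂ (Fin n)) :=
          Module.End.mem_eigenspace_iff.mp w.2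
        have heq : (lam : ℂ) = μ + μ⁻¹ := smul_left_injective ℂ hw0 (hSw'.symm.trans hSw)
        have hinv' : μ⁻¹ = starRingEnd ℂ μ := by
          rw [Complex.inv_def]
          have hns : Complex.normSq μ = 1 := by
            have h := congrArg (· ^ 2) hμ1
            simp only [Complex.sq_norm, one_pow] at h
            exact h
          rw [hns]
          simp
        have hlc : (lam : ℂ) = 2 * μ.re := by
          rw [heq, hinv', Complex.add_conj]
          push_cast; ring
        have hlr : lam = 2 * μ.re := by exact_mod_cast hlc
        rw [hlr, hre]
      have hSid : ∀ v, S v = ((2 * r : ℝ) : ℂ) • v := by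
        have hS : S = ((2 * r : ℝ) : ℂ)
            • (LinearMap.id (R := ℂ) (M := EuclideanSpace ℂ (Fin n))) := by
          apply (hSym.eigenvectorBasis hfin).toBasis.ext
          intro i
          rw [OrthonormalBasis.coe_toBasis, hSym.apply_eigenvectorBasis, hEig i]
          simp
        intro v
        rw [hS]
        simp
      refine ⟨Real.sqrt (2 - 2 * r), fun v hv => ?_⟩
      have hvv : ⟪v, v⟫ = 1 := by
        rw [inner_self_eq_norm_sq_to_K (𝕜 := ℂ), hv]; norm_num
      have hSv : ⟪S v, v⟫ = ⟪T v, v⟫ + starRingEnd ℂ ⟪T v, v⟫ := by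
        rw [hSdef]
        simp only [LinearMap.add_apply, inner_add_left, LinearMap.adjoint_inner_left]
        rw [← inner_conj_symm, Complex.conj_conj]
      have hSv2 : ⟪S v, v⟫ = ((2 * r : ℝ) : ℂ) := by
        rw [hSid v, inner_smul_left, hvv, mul_one, Complex.conj_ofReal]
      have hrein : Complex.re ⟪T v, v⟫ = r := by
        have h := congrArg Complex.re (hSv.symm.trans hSv2)
        simp only [Complex.add_re, Complex.conj_re, Complex.ofReal_re] at h
        linarith
      have hsq : ‖T v - v‖ ^ 2 = 2 - 2 * r := by
        rw [@norm_sub_sq ℂ, hnorm, hv, RCLike.re_to_complex, hrein]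
        ring
      rw [← Real.sqrt_sq (norm_nonneg (T v - v)), hsq]
end
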